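/- For every integer n ≥ 4, the number of equivalence classes of Conway sequences of n under reversal (i.e., the number of rational knots and links with n crossings) is 2^(n−4) + 2^(⌊n/2⌋−2). -/

import Mathlib

/-- A Conway sequence of `n`: a nonempty list of positive integers summing to `n`
whose first and last entries are both at least 2. -/
def IsConwaySeq (n : ℕ) (l : List ℕ) : Prop :=
  l ≠ [] ∧ (∀ x ∈ l, 0 < x) ∧ l.sum = n ∧ 2 ≤ l.headI ∧ 2 ≤ l.getLastI

namespace ConwayKL

open List

variable {n : ℕ}

/-! ### List helpers -/

lemma exists_concat {l : List ℕ} (h : l ≠ []) : ∃ t a, l = t ++ [a] := by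
  rcases l.eq_nil_or_concat with rfl | ⟨t, a, rfl⟩
  · exact absurd rfl h
  · exact ⟨t, a, by simp⟩

lemma headI_append {l r : List ℕ} (h : l ≠ []) : (l ++ r).headI = l.headI := by
  cases l <;> simp_all

@[simp] lemma getLastI_concat (t : List ℕ) (a : ℕ) : (t ++ [a]).getLastI = a := by
  simp [List.getLastI_eq_getLast?]

lemma headI_reverse (l : List ℕ) : l.reverse.headI = l.getLastI := by
  rcases l.eq_nil_or_concat with rfl | ⟨t, a, rfl⟩ <;>
    simp [List.getLastI_eq_getLast?, List.concat_eq_append, Option.iget]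

lemma getLastI_reverse (l : List ℕ) : l.reverse.getLastI = l.headI := by
  have := headI_reverse l.reverse
  simpa using this.symm

lemma isConwaySeq_reverse {l : List ℕ} (h : IsConwaySeq n l) : IsConwaySeq n l.reverse := by
  obtain ⟨h0, h1, h2, h3, h4⟩ := h
  refine ⟨by simpa using h0, by simpa using h1, ?_, ?_, ?_⟩
  · rw [List.sum_reverse]; exact h2
  · rw [headI_reverse]; exact h4
  · rw [getLastI_reverse]; exact h3

/-! ### Increment/decrement of the last entry -/

def dLast (l : List ℕ) : List ℕ := (l.reverse.modifyHead (· - 1)).reverse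

def iLast (l : List ℕ) : List ℕ := (l.reverse.modifyHead (· + 1)).reverse

@[simp] lemma dLast_concat (t : List ℕ) (a : ℕ) : dLast (t ++ [a]) = t ++ [a - 1] := by
  simp [dLast]

@[simp] lemma iLast_concat (t : List ℕ) (a : ℕ) : iLast (t ++ [a]) = t ++ [a + 1] := by
  simp [iLast]

lemma iLast_dLast {l : List ℕ} (h0 : l ≠ []) (h : 1 ≤ l.getLastI) : iLast (dLast l) = l := by
  obtain ⟨t, a, rfl⟩ := exists_concat h0
  rw [dLast_concat, iLast_concat]
  simp only [getLastI_concat] at h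
  have : a - 1 + 1 = a := by omega
  rw [this]

lemma dLast_iLast {l : List ℕ} (h0 : l ≠ []) : dLast (iLast l) = l := by
  obtain ⟨t, a, rfl⟩ := exists_concat h0
  rw [iLast_concat, dLast_concat]
  simp

/-! ### modifyHead specs -/

lemma mh_add_spec {b : List ℕ} (hb : b ≠ []) (hpos : ∀ x ∈ b, 0 < x) :
    (∀ x ∈ b.modifyHead (· + 1), 0 < x) ∧ (b.modifyHead (· + 1)).sum = b.sum + 1 ∧
      2 ≤ (b.modifyHead (· + 1)).headI := by
  cases b with
  | nil => exact absurd rfl hb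
  | cons a t =>
    have ha : 0 < a := hpos a (by simp)
    refine ⟨?_, by simp; omega, by simp; omega⟩
    intro x hx
    simp only [List.modifyHead_cons, List.mem_cons] at hx
    rcases hx with rfl | hx
    · omega
    · exact hpos x (by simp [hx])

lemma mh_sub_spec {b : List ℕ} (hb : b ≠ []) (hpos : ∀ x ∈ b, 0 < x) (hh : 2 ≤ b.headI) :
    (∀ x ∈ b.modifyHead (· - 1), 0 < x) ∧ (b.modifyHead (· - 1)).sum + 1 = b.sum := by
  cases b with
  | nil => exact absurd rfl hb
  | cons a t =>
    simp only [List.headI_cons] at hh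
    refine ⟨?_, by simp; omega⟩
    intro x hx
    simp only [List.modifyHead_cons, List.mem_cons] at hx
    rcases hx with rfl | hx
    · omega
    · exact hpos x (by simp [hx])

lemma mh_sub_add {b : List ℕ} (hh : 1 ≤ b.headI) :
    (b.modifyHead (· - 1)).modifyHead (· + 1) = b := by
  cases b with
  | nil => rfl
  | cons a t =>
    simp only [List.headI_cons] at hh
    simp only [List.modifyHead_cons, List.cons.injEq, and_true]
    omega

lemma mh_add_sub (b : List ℕ) : (b.modifyHead (· + 1)).modifyHead (· - 1) = b := by
  cases b <;> simp

/-! ### Compositions with first block at least 2 -/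

lemma blocks_ne_nil {M : ℕ} (hM : 1 ≤ M) (c : Composition M) : c.blocks ≠ [] := by
  intro h
  have := c.blocks_sum
  rw [h] at this
  simp at this
  omega

/-- Compositions of `M` whose first block is at least `2` are in bijection with
compositions of `M - 1`, by decrementing/incrementing the first block. -/
def compHeadEquiv (M : ℕ) (hM : 2 ≤ M) :
    {c : Composition M // 2 ≤ c.blocks.headI} ≃ Composition (M - 1) where
  toFun c := ⟨c.1.blocks.modifyHead (· - 1),
    fun hi => (mh_sub_spec (blocks_ne_nil (by omega) c.1)
      (fun _ hx => c.1.blocks_pos hx) c.2).1 _ hi,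
    by
      have h1 := (mh_sub_spec (blocks_ne_nil (by omega) c.1)
        (fun _ hx => c.1.blocks_pos hx) c.2).2
      have h2 := c.1.blocks_sum
      omega⟩
  invFun d := ⟨⟨d.blocks.modifyHead (· + 1),
    fun hi => (mh_add_spec (blocks_ne_nil (by omega) d)
      (fun _ hx => d.blocks_pos hx)).1 _ hi,
    by
      have h1 := (mh_add_spec (blocks_ne_nil (M := M - 1) (by omega) d)
        (fun _ hx => d.blocks_pos hx)).2.1
      have h2 := d.blocks_sum
      omega⟩,
    (mh_add_spec (blocks_ne_nil (by omega) d) (fun _ hx => d.blocks_pos hx)).2.2⟩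
  left_inv c := by
    apply Subtype.ext
    apply Composition.ext
    exact mh_sub_add (by have := c.2; omega)
  right_inv d := by
    apply Composition.ext
    exact mh_add_sub d.blocks

lemma card_comp_head {M : ℕ} (hM : 2 ≤ M) :
    Nat.card {c : Composition M // 2 ≤ c.blocks.headI} = 2 ^ (M - 2) := by
  have e : M - 1 - 1 = M - 2 := by omega
  rw [Nat.card_congr (compHeadEquiv M hM), Nat.card_eq_fintype_card, composition_card, e]

/-! ### Counting all Conway sequences -/

lemma dLast_spec {l : List ℕ} (hn : 3 ≤ n) (h : IsConwaySeq n l) :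
    (∀ x ∈ dLast l, 0 < x) ∧ (dLast l).sum = n - 1 ∧ 2 ≤ (dLast l).headI := by
  obtain ⟨h0, h1, h2, h3, h4⟩ := h
  obtain ⟨t, a, rfl⟩ := exists_concat h0
  simp only [getLastI_concat] at h4
  rw [dLast_concat]
  refine ⟨?_, ?_, ?_⟩
  · intro x hx
    rcases List.mem_append.1 hx with hx | hx
    · exact h1 x (by simp [hx])
    · simp only [List.mem_singleton] at hx; omega
  · simp only [List.sum_append, List.sum_cons, List.sum_nil] at h2 ⊢
    omega
  · cases t with
    | nil =>
      simp only [List.nil_append, List.sum_cons, List.sum_nil] at h2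
      simp only [List.nil_append, List.headI_cons]
      omega
    | cons b s =>
      rw [headI_append (by simp)] at h3 ⊢
      exact h3

lemma iLast_spec {b : List ℕ} (hn : 3 ≤ n) (hb : b ≠ []) (hpos : ∀ x ∈ b, 0 < x)
    (hsum : b.sum = n - 1) (hh : 2 ≤ b.headI) : IsConwaySeq n (iLast b) := by
  obtain ⟨t, a, rfl⟩ := exists_concat hb
  rw [iLast_concat]
  have ha : 0 < a := hpos a (by simp)
  refine ⟨by simp, ?_, ?_, ?_, by simp; omega⟩
  · intro x hx
    rcases List.mem_append.1 hx with hx | hx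
    · exact hpos x (by simp [hx])
    · simp only [List.mem_singleton] at hx; omega
  · simp only [List.sum_append, List.sum_cons, List.sum_nil] at hsum ⊢
    omega
  · cases t with
    | nil =>
      simp only [List.nil_append, List.headI_cons] at hh ⊢
      omega
    | cons c s =>
      rw [headI_append (by simp)] at hh ⊢
      exact hh

/-- Conway sequences of `n` are in bijection with compositions of `n-1` whose first
block is at least 2, by decrementing/incrementing the last entry. -/
def conwayEquiv (hn : 3 ≤ n) :
    {l : List ℕ // IsConwaySeq n l} ≃ {c : Composition (n - 1) // 2 ≤ c.blocks.headI} where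
  toFun l := ⟨⟨dLast l.1, fun hi => (dLast_spec hn l.2).1 _ hi, (dLast_spec hn l.2).2.1⟩,
    (dLast_spec hn l.2).2.2⟩
  invFun c := ⟨iLast c.1.blocks,
    iLast_spec hn (blocks_ne_nil (by omega) c.1) (fun x hx => c.1.blocks_pos hx)
      c.1.blocks_sum c.2⟩
  left_inv l := by
    apply Subtype.ext
    exact iLast_dLast l.2.1 (by have := l.2.2.2.2.2; omega)
  right_inv c := by
    apply Subtype.ext
    apply Composition.ext
    exact dLast_iLast (blocks_ne_nil (by omega) c.1)

lemma card_conway (hn : 4 ≤ n) :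
    Nat.card {l : List ℕ // IsConwaySeq n l} = 2 ^ (n - 3) := by
  have e : n - 1 - 2 = n - 3 := by omega
  rw [Nat.card_congr (conwayEquiv (by omega)), card_comp_head (by omega), e]

/-! ### Counting palindromic Conway sequences -/

/-- Reconstruction of a palindrome from its half `h` (with center `n - 2 * h.sum` if nonzero). -/
def dec (n : ℕ) (h : List ℕ) : List ℕ :=
  h ++ (if n - 2 * h.sum = 0 then [] else [n - 2 * h.sum]) ++ h.reverse

lemma dec_palindrome (n : ℕ) (h : List ℕ) : (dec n h).reverse = dec n h := by
  unfold dec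
  split <;> simp

lemma dec_take (n : ℕ) (h : List ℕ) : (dec n h).take ((dec n h).length / 2) = h := by
  have hml : (if n - 2 * h.sum = 0 then ([] : List ℕ) else [n - 2 * h.sum]).length ≤ 1 := by
    split <;> simp
  have hlen : (dec n h).length = h.length +
      (if n - 2 * h.sum = 0 then ([] : List ℕ) else [n - 2 * h.sum]).length + h.length := by
    simp [dec]
    omega
  have hhalf : (dec n h).length / 2 = h.length := by omega
  rw [hhalf]
  unfold dec
  rw [List.append_assoc]
  exact List.take_left

lemma dec_isConway (hn : 4 ≤ n) {h : List ℕ} (hpos : ∀ x ∈ h, 0 < x)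
    (hsum : h.sum ≤ n / 2) (hhead : h = [] ∨ 2 ≤ h.headI) :
    IsConwaySeq n (dec n h) := by
  have h2s : 2 * h.sum ≤ n := by omega
  have hsum' : (dec n h).sum = n := by
    unfold dec
    rcases eq_or_ne (n - 2 * h.sum) 0 with h0 | h0
    · rw [if_pos h0]
      simp only [List.sum_append, List.sum_nil, List.sum_reverse]
      omega
    · rw [if_neg h0]
      simp only [List.sum_append, List.sum_cons, List.sum_nil, List.sum_reverse]
      omega
  have hhead' : 2 ≤ (dec n h).headI := by
    rcases hhead with rfl | hh
    · have hc : n - 2 * ([] : List ℕ).sum ≠ 0 := by simp; omega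
      unfold dec
      rw [if_neg hc]
      simp only [List.sum_nil, Nat.mul_zero, Nat.sub_zero, List.nil_append,
        List.reverse_nil, List.append_nil, List.headI_cons]
      omega
    · have hne : h ≠ [] := by
        intro hd; rw [hd] at hh; simp at hh
      unfold dec
      rw [List.append_assoc, headI_append hne]
      exact hh
  refine ⟨?_, ?_, hsum', hhead', ?_⟩
  · intro hd
    have := hsum'
    rw [hd] at this
    simp at this
    omega
  · intro x hx
    unfold dec at hx
    simp only [List.mem_append] at hx
    rcases hx with (hx | hx) | hx
    · exact hpos x hx
    · rcases eq_or_ne (n - 2 * h.sum) 0 with h0 | h0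
      · rw [if_pos h0] at hx; simp at hx
      · rw [if_neg h0] at hx
        simp only [List.mem_singleton] at hx
        omega
    · exact hpos x (by simpa using hx)
  · rw [← headI_reverse, dec_palindrome]
    exact hhead'

lemma dec_pal (hn : 4 ≤ n) {h : List ℕ} (hpos : ∀ x ∈ h, 0 < x)
    (hsum : h.sum ≤ n / 2) (hhead : h = [] ∨ 2 ≤ h.headI) :
    IsConwaySeq n (dec n h) ∧ (dec n h).reverse = dec n h :=
  ⟨dec_isConway hn hpos hsum hhead, dec_palindrome n h⟩

/-- The subtype of "halves": positive lists of sum at most `n/2`, empty or starting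
with an entry at least 2. -/
abbrev Halves (n : ℕ) : Type :=
  {h : List ℕ // (∀ x ∈ h, 0 < x) ∧ h.sum ≤ n / 2 ∧ (h = [] ∨ 2 ≤ h.headI)}

lemma dec_bijective (hn : 4 ≤ n) :
    Function.Bijective (fun h : Halves n =>
      (⟨dec n h.1, dec_pal hn h.2.1 h.2.2.1 h.2.2.2⟩ :
        {l : List ℕ // IsConwaySeq n l ∧ l.reverse = l})) := by
  constructor
  · intro h₁ h₂ heq
    apply Subtype.ext
    have hd : dec n h₁.1 = dec n h₂.1 := congrArg Subtype.val heq
    calc h₁.1 = (dec n h₁.1).take ((dec n h₁.1).length / 2) := (dec_take n h₁.1).symm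
    _ = (dec n h₂.1).take ((dec n h₂.1).length / 2) := by rw [hd]
    _ = h₂.1 := dec_take n h₂.1
  · rintro ⟨l, ⟨h0, h1, h2, h3, h4⟩, hp⟩
    set a := l.length / 2 with ha
    set h := l.take a with hht
    set r := l.drop a with hrt
    have hlr : h ++ r = l := List.take_append_drop a l
    have hlh : h.length = a := by
      rw [hht, List.length_take]
      have hal : a ≤ l.length := by omega
      omega
    have hrlen : r.length = l.length - a := by simp [hrt]
    have hpos_h : ∀ x ∈ h, 0 < x := fun x hx => h1 x (List.mem_of_mem_take hx)
    have hcases : r.length = a ∨ r.length = a + 1 := by omega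
    have hhead : h = [] ∨ 2 ≤ h.headI := by
      rcases eq_or_ne h [] with he | he
      · exact Or.inl he
      · right
        rw [← hlr, headI_append he] at h3
        exact h3
    rcases hcases with hre | hro
    · -- even case : l = h ++ h.reverse
      have hrev : h ++ r = r.reverse ++ h.reverse := by
        rw [hlr]
        conv_lhs => rw [← hp]
        rw [← hlr]
        simp
      have hinj := List.append_inj hrev (by simp [hre, hlh])
      have hr_eq : r = h.reverse := by rw [hinj.1]; simp
      have hsum2 : h.sum + h.sum = n := by
        have hh2 := h2
        rw [← hlr, hr_eq] at hh2
        simpa [List.sum_reverse] using hh2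
      refine ⟨⟨h, hpos_h, by omega, hhead⟩, ?_⟩
      apply Subtype.ext
      show dec n h = l
      unfold dec
      rw [if_pos (by omega : n - 2 * h.sum = 0), ← hlr, hr_eq]
      simp
    · -- odd case : l = h ++ b :: h.reverse
      have hrne : r ≠ [] := by
        intro hd; rw [hd] at hro; simp at hro
      obtain ⟨b, r', hbr⟩ : ∃ b r', r = b :: r' := by
        cases hbr : r with
        | nil => exact absurd hbr hrne
        | cons b r' => exact ⟨b, r', rfl⟩
      have hrev : r'.reverse ++ (b :: h.reverse) = h ++ (b :: r') := by
        have h5 : (h ++ (b :: r')).reverse = h ++ (b :: r') := by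
          rw [← hbr, hlr, hp]
        calc r'.reverse ++ (b :: h.reverse) = (h ++ (b :: r')).reverse := by simp
        _ = h ++ (b :: r') := h5
      have hlen' : r'.reverse.length = h.length := by
        simp only [List.length_reverse]
        have : r.length = r'.length + 1 := by rw [hbr]; simp
        omega
      have hinj := List.append_inj hrev hlen'
      have hr'h : r' = h.reverse := by
        have h6 := hinj.2
        simp only [List.cons.injEq, true_and] at h6
        exact h6.symm
      have hbpos : 0 < b := h1 b (by rw [← hlr, hbr]; simp)
      have hsum3 : h.sum + (b + h.sum) = n := by
        have hh2 := h2
        rw [← hlr, hbr, hr'h] at hh2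
        simpa [List.sum_reverse] using hh2
      refine ⟨⟨h, hpos_h, by omega, hhead⟩, ?_⟩
      apply Subtype.ext
      show dec n h = l
      unfold dec
      have hcb : n - 2 * h.sum = b := by omega
      rw [if_neg (by omega), hcb, ← hlr, hbr, hr'h]
      simp

/-! ### From halves to compositions -/

lemma dropLast_spec {b : List ℕ} (hb : b ≠ []) (hpos : ∀ x ∈ b, 0 < x) :
    (∀ x ∈ b.dropLast, 0 < x) ∧ b.dropLast.sum + b.getLastI = b.sum ∧ 1 ≤ b.getLastI ∧
      b.dropLast ++ [b.getLastI] = b ∧ (b.dropLast = [] ∨ b.dropLast.headI = b.headI) := by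
  obtain ⟨t, a, rfl⟩ := exists_concat hb
  have ha : 0 < a := hpos a (by simp)
  rw [List.dropLast_concat, getLastI_concat]
  refine ⟨fun x hx => hpos x (by simp [hx]), by simp, ha, rfl, ?_⟩
  cases t with
  | nil => exact Or.inl rfl
  | cons c s => exact Or.inr (by rw [headI_append (by simp)])

lemma headI_concat_two {t : List ℕ} {d : ℕ} (hc : (t = [] ∧ 2 ≤ d) ∨ 2 ≤ t.headI) :
    2 ≤ (t ++ [d]).headI := by
  cases t with
  | nil =>
    rcases hc with ⟨_, h⟩ | h
    · simpa using h
    · simp at h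
  | cons a s =>
    rcases hc with ⟨h, _⟩ | h
    · simp at h
    · simpa using h

/-- Halves are in bijection with compositions of `n/2 + 1` with first block at least 2,
by appending the deficit. -/
def halfEquiv (hn : 4 ≤ n) :
    Halves n ≃ {c : Composition (n / 2 + 1) // 2 ≤ c.blocks.headI} where
  toFun h := ⟨⟨h.1 ++ [n / 2 + 1 - h.1.sum], by
      intro i hi
      rcases List.mem_append.1 hi with hi | hi
      · exact h.2.1 i hi
      · simp only [List.mem_singleton] at hi
        have := h.2.2.1
        omega, by
      simp only [List.sum_append, List.sum_cons, List.sum_nil]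
      have := h.2.2.1
      omega⟩, by
    show 2 ≤ (h.1 ++ [n / 2 + 1 - h.1.sum]).headI
    apply headI_concat_two
    rcases h.2.2.2 with he | hh
    · left
      refine ⟨he, ?_⟩
      have hs0 : h.1.sum = 0 := by rw [he]; simp
      omega
    · right; exact hh⟩
  invFun c := ⟨c.1.blocks.dropLast, by
    have S := dropLast_spec (blocks_ne_nil (by omega) c.1) (fun _ hx => c.1.blocks_pos hx)
    refine ⟨S.1, ?_, ?_⟩
    · have h1 := S.2.1
      have h2 := S.2.2.1
      have h3 := c.1.blocks_sum
      omega
    · rcases S.2.2.2.2 with he | hh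
      · exact Or.inl he
      · exact Or.inr (by rw [hh]; exact c.2)⟩
  left_inv h := by
    apply Subtype.ext
    exact List.dropLast_concat
  right_inv c := by
    apply Subtype.ext
    apply Composition.ext
    have S := dropLast_spec (blocks_ne_nil (by omega) c.1) (fun _ hx => c.1.blocks_pos hx)
    have h1 := S.2.1
    have h3 := c.1.blocks_sum
    have hd : n / 2 + 1 - c.1.blocks.dropLast.sum = c.1.blocks.getLastI := by omega
    show c.1.blocks.dropLast ++ [n / 2 + 1 - c.1.blocks.dropLast.sum] = c.1.blocks
    rw [hd]
    exact S.2.2.2.1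

lemma card_pal (hn : 4 ≤ n) :
    Nat.card {l : List ℕ // IsConwaySeq n l ∧ l.reverse = l} = 2 ^ (n / 2 - 1) := by
  have h1 : Nat.card (Halves n) = Nat.card {l : List ℕ // IsConwaySeq n l ∧ l.reverse = l} :=
    Nat.card_eq_of_bijective _ (dec_bijective hn)
  have e : n / 2 + 1 - 2 = n / 2 - 1 := by omega
  rw [← h1, Nat.card_congr (halfEquiv hn), card_comp_head (by omega), e]

/-! ### Finiteness -/

lemma finite_conway (n : ℕ) : Finite {l : List ℕ // IsConwaySeq n l} := by
  apply Finite.of_injective (fun l : {l : List ℕ // IsConwaySeq n l} =>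
    (⟨l.1, fun hx => l.2.2.1 _ hx, l.2.2.2.1⟩ : Composition n))
  intro a b hab
  apply Subtype.ext
  exact congrArg Composition.blocks hab

/-! ### Burnside-type counting -/

lemma two_mul_card (hn : 4 ≤ n) :
    2 * Nat.card (Quot (fun a b : {l : List ℕ // IsConwaySeq n l} =>
        a.1 = b.1 ∨ a.1 = b.1.reverse)) =
      Nat.card {l : List ℕ // IsConwaySeq n l} +
        Nat.card {l : List ℕ // IsConwaySeq n l ∧ l.reverse = l} := by
  classical
  letI : Finite {l : List ℕ // IsConwaySeq n l} := finite_conway n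
  letI : Fintype {l : List ℕ // IsConwaySeq n l} := Fintype.ofFinite _
  set S := {l : List ℕ // IsConwaySeq n l} with hSdef
  set r : S → S → Prop := fun a b => a.1 = b.1 ∨ a.1 = b.1.reverse with hrdef
  have hequiv : Equivalence r := by
    constructor
    · exact fun a => Or.inl rfl
    · rintro a b (h | h)
      · exact Or.inl h.symm
      · exact Or.inr (by rw [h]; simp)
    · rintro a b c (h1 | h1) (h2 | h2)
      · exact Or.inl (h1.trans h2)
      · exact Or.inr (h1.trans h2)
      · exact Or.inr (by rw [h1, h2])
      · exact Or.inl (by rw [h1, h2]; simp)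
  letI : Finite (Quot r) := Finite.of_surjective (Quot.mk r) Quot.mk_surjective
  letI : Fintype (Quot r) := Fintype.ofFinite _
  letI : Finite {l : List ℕ // IsConwaySeq n l ∧ l.reverse = l} :=
    Finite.of_injective (fun l => (⟨l.1, l.2.1⟩ : S)) (by
      intro a b hab
      have h2 : a.1 = b.1 := congrArg (fun x : S => x.1) hab
      exact Subtype.ext h2)
  letI : Fintype {l : List ℕ // IsConwaySeq n l ∧ l.reverse = l} := Fintype.ofFinite _
  have hmk : ∀ x y : S, Quot.mk r x = Quot.mk r y ↔ r x y := fun x y => by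
    rw [Quot.eq, Equivalence.eqvGen_iff hequiv]
  rw [Nat.card_eq_fintype_card, Nat.card_eq_fintype_card, Nat.card_eq_fintype_card]
  have hScard : Fintype.card S =
      ∑ q : Quot r, (Finset.univ.filter (fun x : S => Quot.mk r x = q)).card := by
    rw [← Finset.card_univ]
    exact Finset.card_eq_sum_card_fiberwise (fun x _ => Finset.mem_univ _)
  have hpalcard : Fintype.card {l : List ℕ // IsConwaySeq n l ∧ l.reverse = l} =
      (Finset.univ.filter (fun x : S => x.1.reverse = x.1)).card := by
    rw [← Fintype.card_subtype]
    exact Fintype.card_congr (Equiv.subtypeSubtypeEquivSubtypeInter _ _).symm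
  have hPcard : (Finset.univ.filter (fun x : S => x.1.reverse = x.1)).card =
      ∑ q : Quot r, ((Finset.univ.filter (fun x : S => x.1.reverse = x.1)).filter
        (fun x => Quot.mk r x = q)).card :=
    Finset.card_eq_sum_card_fiberwise (fun x _ => Finset.mem_univ _)
  have hfib : ∀ q : Quot r,
      (Finset.univ.filter (fun x : S => Quot.mk r x = q)).card +
      ((Finset.univ.filter (fun x : S => x.1.reverse = x.1)).filter
        (fun x => Quot.mk r x = q)).card = 2 := by
    intro q
    induction q using Quot.ind with
    | _ a =>
      by_cases hpal : a.1.reverse = a.1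
      · have h1 : (Finset.univ.filter (fun x : S => Quot.mk r x = Quot.mk r a)) = {a} := by
          ext x
          simp only [Finset.mem_filter, Finset.mem_univ, true_and, Finset.mem_singleton, hmk]
          constructor
          · rintro (h | h)
            · exact Subtype.ext h
            · exact Subtype.ext (by rw [h, hpal])
          · rintro rfl; exact Or.inl rfl
        have h2 : ((Finset.univ.filter (fun x : S => x.1.reverse = x.1)).filter
            (fun x => Quot.mk r x = Quot.mk r a)) = {a} := by
          ext x
          simp only [Finset.mem_filter, Finset.mem_univ, true_and, Finset.mem_singleton, hmk]
          constructor
          · rintro ⟨hx, (h | h)⟩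
            · exact Subtype.ext h
            · exact Subtype.ext (by rw [h, hpal])
          · rintro rfl; exact ⟨hpal, Or.inl rfl⟩
        rw [h1, h2]
        simp
      · set arev : S := ⟨a.1.reverse, isConwaySeq_reverse a.2⟩ with harev
        have hane : a ≠ arev := by
          intro hh
          exact hpal (congrArg Subtype.val hh).symm
        have h1 : (Finset.univ.filter (fun x : S => Quot.mk r x = Quot.mk r a)) = {a, arev} := by
          ext x
          simp only [Finset.mem_filter, Finset.mem_univ, true_and, Finset.mem_insert,
            Finset.mem_singleton, hmk]
          constructor
          · rintro (h | h)
            · exact Or.inl (Subtype.ext h)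
            · exact Or.inr (Subtype.ext h)
          · rintro (rfl | rfl)
            · exact Or.inl rfl
            · exact Or.inr rfl
        have h2 : ((Finset.univ.filter (fun x : S => x.1.reverse = x.1)).filter
            (fun x => Quot.mk r x = Quot.mk r a)) = ∅ := by
          ext x
          simp only [Finset.mem_filter, Finset.mem_univ, true_and, Finset.notMem_empty,
            iff_false, not_and, hmk]
          rintro hx (h | h)
          · exact hpal (by rw [← h]; exact hx)
          · apply hpal
            have := hx
            rw [h] at this
            simp only [List.reverse_reverse] at this
            exact this.symm
        rw [h1, h2, Finset.card_pair hane]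
        simp
  rw [hScard, hpalcard, hPcard, ← Finset.sum_add_distrib]
  have : ∀ q ∈ (Finset.univ : Finset (Quot r)), ((Finset.univ.filter
      (fun x : S => Quot.mk r x = q)).card +
      ((Finset.univ.filter (fun x : S => x.1.reverse = x.1)).filter
        (fun x => Quot.mk r x = q)).card) = 2 := fun q _ => hfib q
  rw [Finset.sum_congr rfl this, Finset.sum_const, Finset.card_univ, smul_eq_mul]
  ring

end ConwayKL

/-- For every `n ≥ 4`, the number of equivalence classes of Conway sequences of `n`
under reversal is `2^(n-4) + 2^(⌊n/2⌋-2)`. -/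
theorem rational_KL_count (n : ℕ) (hn : 4 ≤ n) :
    Nat.card (Quot (fun a b : {l : List ℕ // IsConwaySeq n l} =>
      a.1 = b.1 ∨ a.1 = b.1.reverse)) = 2 ^ (n - 4) + 2 ^ (n / 2 - 2) := by
  have h2 := ConwayKL.two_mul_card hn
  rw [ConwayKL.card_conway hn, ConwayKL.card_pal hn] at h2
  have e1 : n - 3 = n - 4 + 1 := by omega
  have e2 : n / 2 - 1 = n / 2 - 2 + 1 := by omega
  rw [e1, e2, pow_succ, pow_succ] at h2
  generalize hA : (2 : ℕ) ^ (n - 4) = A at h2 ⊢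
  generalize hB : (2 : ℕ) ^ (n / 2 - 2) = B at h2 ⊢
  omega
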